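/- For all natural numbers p and r there exists a natural number N with the following property: for every q ≥ N and every function F assigning to each unordered pair {u, v} of distinct elements of Fin q a Boolean function f_{uv} on unordered pairs of distinct elements of Fin p, there exist a subset S of Fin q with |S| = r and a single Boolean function f on unordered pairs of distinct elements of Fin p such that F({u,v}) = f for all pairs {u,v} of distinct elements of S, and moreover either (i) the simple graph on Fin p whose edges are the pairs {i,j} with f({i,j}) = false contains a triangle (a clique of size 3), or (ii) the number of unordered pairs {i,j} of distinct elements of Fin p with f({i,j}) = true is at least Z(p) = ⌊p/2⌋·⌊(p−1)/2⌋. -/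

import Mathlib

open Finset

/-- Mantel's theorem: a triangle-free graph has at most `n^2/4` edges. -/
lemma mantel_aux {V : Type*} [Fintype V] [DecidableEq V] (G : SimpleGraph V)
    [DecidableRel G.Adj] (h : G.CliqueFree 3) :
    4 * G.edgeFinset.card ≤ (Fintype.card V) ^ 2 := by
  cases isEmpty_or_nonempty V with
  | inl hV =>
    have : G.edgeFinset = ∅ := by
      ext e
      induction e with
      | _ a b => exact (hV.false a).elim
    simp [this]
  | inr hV =>
    obtain ⟨v, -, hv⟩ := Finset.exists_max_image (univ : Finset V)
      (fun u => G.degree u) univ_nonempty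
    set d := G.degree v with hd
    set T : Finset V := univ \ G.neighborFinset v with hT
    have hsub : G.edgeFinset ⊆ T.biUnion (fun u => G.incidenceFinset u) := by
      intro e he
      induction e with
      | _ a b =>
        rw [SimpleGraph.mem_edgeFinset, SimpleGraph.mem_edgeSet] at he
        have hnot : ¬ (G.Adj v a ∧ G.Adj v b) := by
          rintro ⟨h1, h2⟩
          exact h {v, a, b} (SimpleGraph.is3Clique_triple_iff.mpr ⟨h1, h2, he⟩)
        rw [Finset.mem_biUnion]
        by_cases ha : G.Adj v a
        · have hvb : ¬ G.Adj v b := fun hvb => hnot ⟨ha, hvb⟩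
          refine ⟨b, ?_, ?_⟩
          · simp [hT, hvb]
          · rw [SimpleGraph.mem_incidenceFinset]
            exact ⟨he, Sym2.mem_mk_right a b⟩
        · refine ⟨a, ?_, ?_⟩
          · simp [hT, ha]
          · rw [SimpleGraph.mem_incidenceFinset]
            exact ⟨he, Sym2.mem_mk_left a b⟩
    have hcard : G.edgeFinset.card ≤ T.card * d := by
      calc G.edgeFinset.card ≤ (T.biUnion (fun u => G.incidenceFinset u)).card := card_le_card hsub
        _ ≤ ∑ u ∈ T, (G.incidenceFinset u).card := card_biUnion_le
        _ ≤ ∑ u ∈ T, d := by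
            refine Finset.sum_le_sum fun u _ => ?_
            rw [SimpleGraph.card_incidenceFinset_eq_degree]
            exact hv u (mem_univ u)
        _ = T.card * d := by rw [Finset.sum_const, smul_eq_mul]
    have hTcard : T.card = Fintype.card V - d := by
      rw [hT, Finset.card_sdiff_of_subset (subset_univ _), card_univ,
        SimpleGraph.card_neighborFinset_eq_degree]
    have hdle : d ≤ Fintype.card V := by
      rw [hd, ← SimpleGraph.card_neighborFinset_eq_degree]
      exact Finset.card_le_univ _
    obtain ⟨a, ha⟩ : ∃ a, Fintype.card V = a + d := ⟨Fintype.card V - d, by omega⟩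
    have key : 4 * (a * d) ≤ (a + d) ^ 2 := by
      zify
      nlinarith [sq_nonneg ((a : ℤ) - (d : ℤ))]
    calc 4 * G.edgeFinset.card ≤ 4 * (T.card * d) := by omega
      _ = 4 * ((a + d - d) * d) := by rw [hTcard, ha]
      _ = 4 * (a * d) := by rw [Nat.add_sub_cancel]
      _ ≤ (a + d) ^ 2 := key
      _ = (Fintype.card V) ^ 2 := by rw [ha]

lemma arith_aux (p cT m' : ℕ) (h1 : cT + m' = p * (p - 1) / 2) (h2 : 4 * m' ≤ p ^ 2) :
    p / 2 * ((p - 1) / 2) ≤ cT := by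
  obtain ⟨t, rfl | rfl⟩ := Nat.even_or_odd' p
  · rcases t with _ | s
    · simp
    · have h3 : (2 * (s + 1)) / 2 = s + 1 := by omega
      have h4 : (2 * (s + 1) - 1) / 2 = s := by omega
      have h5 : 2 * (s + 1) - 1 = 2 * s + 1 := by omega
      have e1 : (2 * (s + 1)) * (2 * (s + 1) - 1)
          = 2 * ((s + 1) * s + (s + 1) * (s + 1)) := by rw [h5]; ring
      have e3 : (2 * (s + 1)) ^ 2 = 4 * ((s + 1) * (s + 1)) := by ring
      rw [h3, h4]
      rw [e3] at h2
      omega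
  · have h3 : (2 * t + 1) / 2 = t := by omega
    have h4 : (2 * t + 1 - 1) / 2 = t := by omega
    have h5 : 2 * t + 1 - 1 = 2 * t := by omega
    have e1 : (2 * t + 1) * (2 * t + 1 - 1) = 2 * (t + 2 * (t * t)) := by rw [h5]; ring
    have e3 : (2 * t + 1) ^ 2 = 4 * (t * t) + 4 * t + 1 := by ring
    rw [h3, h4]
    rw [e3] at h2
    omega
lemma prehom_aux {α : Type*} [DecidableEq α] {Color : Type*} [Fintype Color] [DecidableEq Color]
    (C : α → α → Color) :
    ∀ (m : ℕ) (A : Finset α), (Fintype.card Color + 1) ^ m ≤ A.card →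
    ∃ (g : Fin m → α) (h : Fin m → Color),
      Function.Injective g ∧ (∀ i, g i ∈ A) ∧
      ∀ i j : Fin m, i < j → C (g i) (g j) = h i := by
  intro m
  induction m with
  | zero =>
    intro A _
    exact ⟨Fin.elim0, Fin.elim0, fun i => i.elim0, fun i => i.elim0,
      fun i => i.elim0⟩
  | succ m ih =>
    intro A hA
    have hApos : 0 < A.card := lt_of_lt_of_le (pow_pos (Nat.succ_pos _) _) hA
    obtain ⟨x, hx⟩ := Finset.card_pos.mp hApos
    set k := Fintype.card Color with hk
    have hCne : Nonempty Color := ⟨C x x⟩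
    have hcard : k * (k + 1) ^ m ≤ (A.erase x).card := by
      rw [Finset.card_erase_of_mem hx]
      have h1 : (k + 1) ^ (m + 1) = k * (k + 1) ^ m + (k + 1) ^ m := by ring
      have h2 : 0 < (k + 1) ^ m := pow_pos (Nat.succ_pos _) _
      omega
    obtain ⟨c, -, hc⟩ := Finset.exists_le_card_fiber_of_mul_le_card_of_maps_to
      (f := fun y => C x y) (t := (univ : Finset Color))
      (fun a _ => mem_univ _) univ_nonempty (by rwa [card_univ, ← hk])
    set B := (A.erase x).filter (fun y => C x y = c) with hB
    obtain ⟨g', h', hg'inj, hg'mem, hg'col⟩ := ih B hc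
    refine ⟨Fin.cons x g', Fin.cons c h', ?_, ?_, ?_⟩
    · refine Fin.cons_injective_iff.mpr ⟨?_, hg'inj⟩
      rintro ⟨i, hi⟩
      have := hg'mem i
      rw [hi] at this
      exact (Finset.mem_erase.mp (Finset.mem_filter.mp this).1).1 rfl
    · intro i
      refine Fin.cases ?_ ?_ i
      · simpa using hx
      · intro j
        simpa using (Finset.mem_erase.mp (Finset.mem_filter.mp (hg'mem j)).1).2
    · intro i j hij
      have hj0 : j ≠ 0 := fun h0 => by simp [h0] at hij
      obtain ⟨j', rfl⟩ : ∃ j' : Fin m, j = j'.succ := by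
        rcases Fin.eq_zero_or_eq_succ j with h0 | h1
        · exact absurd h0 hj0
        · exact h1
      rcases Fin.eq_zero_or_eq_succ i with rfl | ⟨i', rfl⟩
      · simp only [Fin.cons_zero, Fin.cons_succ]
        exact (Finset.mem_filter.mp (hg'mem j')).2
      · simp only [Fin.cons_succ]
        exact hg'col i' j' (by simpa using hij)



/-- Combinatorial core of bounding the q-side: for all `p r` there is `N` so
that for every `q ≥ N` and every assignment `F` of a Boolean function on
unordered pairs of distinct elements of `Fin p` to each unordered pair of
distinct elements of `Fin q`, there is an `r`-set `S ⊆ Fin q` and a single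
Boolean function `f` agreeing with `F` on all pairs of distinct elements of
`S`, such that either the graph of pairs with `f = false` contains a triangle,
or at least `Z(p) = ⌊p/2⌋·⌊(p-1)/2⌋` pairs `{i,j}` satisfy `f {i,j} = true`. -/
theorem ramsey_turan_dichotomy (p r : ℕ) :
    ∃ N : ℕ, ∀ q : ℕ, N ≤ q →
      ∀ F : Sym2 (Fin q) → Sym2 (Fin p) → Bool,
        ∃ (S : Finset (Fin q)) (f : Sym2 (Fin p) → Bool),
          S.card = r ∧
          (∀ u v : Fin q, u ∈ S → v ∈ S → u ≠ v →
            ∀ e : Sym2 (Fin p), ¬ e.IsDiag → F s(u, v) e = f e) ∧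
          (¬ (SimpleGraph.fromRel fun i j => f s(i, j) = false).CliqueFree 3 ∨
            p / 2 * ((p - 1) / 2) ≤
              (Finset.univ.filter
                fun e : Sym2 (Fin p) => ¬ e.IsDiag ∧ f e = true).card) := by
  classical
  set k := Fintype.card (Sym2 (Fin p) → Bool) with hk
  set m := k * (r - 1) + 1 with hm
  refine ⟨(k + 1) ^ m, fun q hq F => ?_⟩
  have hA : (k + 1) ^ m ≤ (univ : Finset (Fin q)).card := by
    rwa [card_univ, Fintype.card_fin]
  obtain ⟨g, h, hginj, -, hgcol⟩ := prehom_aux (fun u v => F s(u, v)) m univ hA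
  obtain ⟨c, -, hc⟩ := Finset.exists_lt_card_fiber_of_mul_lt_card_of_maps_to
    (f := h) (t := (univ : Finset (Sym2 (Fin p) → Bool))) (n := r - 1)
    (fun a _ => mem_univ _)
    (by rw [card_univ, card_univ, Fintype.card_fin, ← hk]; omega)
  have hr : r ≤ (univ.filter (fun i => h i = c)).card := by omega
  obtain ⟨D, hDsub, hDcard⟩ := Finset.exists_subset_card_eq hr
  refine ⟨D.image g, c, ?_, ?_, ?_⟩
  · rw [Finset.card_image_of_injective _ hginj, hDcard]
  · intro u v hu hv huv e _
    obtain ⟨i, hi, rfl⟩ := Finset.mem_image.mp hu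
    obtain ⟨j, hj, rfl⟩ := Finset.mem_image.mp hv
    have hci : h i = c := (Finset.mem_filter.mp (hDsub hi)).2
    have hcj : h j = c := (Finset.mem_filter.mp (hDsub hj)).2
    have hij : i ≠ j := fun hh => huv (by rw [hh])
    rcases lt_or_gt_of_ne hij with hlt | hgt
    · have h1 := hgcol i j hlt
      rw [h1, hci]
    · have h1 := hgcol j i hgt
      rw [Sym2.eq_swap, h1, hcj]
  · by_cases hcf : (SimpleGraph.fromRel fun i j => c s(i, j) = false).CliqueFree 3
    · right
      set G := SimpleGraph.fromRel (fun i j : Fin p => c s(i, j) = false) with hG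
      have hedge : G.edgeFinset
          = univ.filter (fun e : Sym2 (Fin p) => ¬ e.IsDiag ∧ c e = false) := by
        ext e
        induction e with
        | _ a b =>
          simp only [SimpleGraph.mem_edgeFinset, SimpleGraph.mem_edgeSet, hG,
            SimpleGraph.fromRel_adj, Finset.mem_filter, Finset.mem_univ, true_and,
            Sym2.mk_isDiag_iff]
          constructor
          · rintro ⟨hne, hor⟩
            refine ⟨hne, ?_⟩
            rcases hor with h1 | h1
            · exact h1
            · rwa [Sym2.eq_swap]
          · rintro ⟨hne, h1⟩
            exact ⟨hne, Or.inl h1⟩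
      have hmantel := mantel_aux G hcf
      rw [hedge, Fintype.card_fin] at hmantel
      have h1 : (univ.filter fun e : Sym2 (Fin p) => ¬ e.IsDiag).card = p * (p - 1) / 2 := by
        rw [← Fintype.card_subtype, Sym2.card_subtype_not_diag, Fintype.card_fin,
          Nat.choose_two_right]
      have key := Finset.card_filter_add_card_filter_not
        (s := univ.filter (fun e : Sym2 (Fin p) => ¬ e.IsDiag))
        (p := fun e => c e = true)
      rw [Finset.filter_filter, Finset.filter_filter] at key
      simp only [Bool.not_eq_true] at key
      rw [h1] at key
      exact arith_aux p _ _ key hmantel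
    · left
      exact hcf
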